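/- Every HRRC instance in which each hospital's preference list has length at most 1 admits a strongly stable matching. -/

import Mathlib

/-- `a` is strictly preferred to `b` in the strictly ordered preference list `l`
(most preferred first). -/
def ListPref {α : Type*} [DecidableEq α] (l : List α) (a b : α) : Prop :=
  b ∈ l ∧ l.idxOf a < l.idxOf b

/-- An instance of the Hospitals/Residents problem with Regional Caps (HRRC):
residents `R`, hospitals `H`, strict preference lists on both sides,
hospital capacities `q`, a family `regions` of regions with regional caps `cap`. -/
structure HRRC (R H : Type*) where
  prefR : R → List H
  prefH : H → List R
  q : H → ℕ
  regions : Set (Finset H)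
  cap : Finset H → ℕ

namespace HRRC

variable {R H : Type*} [DecidableEq R] [DecidableEq H]

/-- Well-formedness: preference lists are strict (no repetitions), acceptability is
mutual, and regions are nonempty. -/
def WellFormed (I : HRRC R H) : Prop :=
  (∀ r, (I.prefR r).Nodup) ∧ (∀ h, (I.prefH h).Nodup) ∧
  (∀ r h, h ∈ I.prefR r ↔ r ∈ I.prefH h) ∧
  (∀ E ∈ I.regions, E.Nonempty)

/-- `M(h)`: the set of residents assigned to hospital `h`. -/
def assignedTo (M : Finset (R × H)) (h : H) : Finset R :=
  (M.filter fun p => p.2 = h).image Prod.fst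

/-- `M(E)`: the set of residents assigned to some hospital in the region `E`. -/
def assignedIn (M : Finset (R × H)) (E : Finset H) : Finset R :=
  (M.filter fun p => p.2 ∈ E).image Prod.fst

/-- `M` is a matching: pairs are mutually acceptable, each resident has at most one
hospital, and no hospital exceeds its capacity. -/
def IsMatching (I : HRRC R H) (M : Finset (R × H)) : Prop :=
  (∀ p ∈ M, p.2 ∈ I.prefR p.1 ∧ p.1 ∈ I.prefH p.2) ∧
  (∀ r h h', (r, h) ∈ M → (r, h') ∈ M → h = h') ∧
  (∀ h, (assignedTo M h).card ≤ I.q h)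

/-- Feasibility: all regional caps are respected. -/
def FeasibleCaps (I : HRRC R H) (M : Finset (R × H)) : Prop :=
  ∀ E ∈ I.regions, (assignedIn M E).card ≤ I.cap E

/-- `M \ {(r, M(r))} ∪ {(r, h)}`. -/
def move (M : Finset (R × H)) (r : R) (h : H) : Finset (R × H) :=
  (M.filter fun p => p.1 ≠ r) ∪ {(r, h)}

/-- `(r, h)` is a blocking pair for `M`. -/
def IsBlockingPair (I : HRRC R H) (M : Finset (R × H)) (r : R) (h : H) : Prop :=
  (r, h) ∉ M ∧ (h ∈ I.prefR r ∧ r ∈ I.prefH h) ∧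
  ((∀ h', (r, h') ∉ M) ∨ ∃ h', (r, h') ∈ M ∧ ListPref (I.prefR r) h h') ∧
  ((assignedTo M h).card < I.q h ∨ ∃ r' ∈ assignedTo M h, ListPref (I.prefH h) r r')

/-- `(r, h)` is a strong blocking pair for `M`. -/
def IsSBP (I : HRRC R H) (M : Finset (R × H)) (r : R) (h : H) : Prop :=
  I.IsBlockingPair M r h ∧
  (I.FeasibleCaps (move M r h) ∨ ∃ r' ∈ assignedTo M h, ListPref (I.prefH h) r r')

/-- `M` is a strongly stable matching of `I`. -/
def IsStronglyStable (I : HRRC R H) (M : Finset (R × H)) : Prop :=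
  I.IsMatching M ∧ I.FeasibleCaps M ∧ ∀ r h, ¬ I.IsSBP M r h

end HRRC

section Aux

open HRRC Classical

variable {R H : Type*} [DecidableEq R] [DecidableEq H]

private lemma eq_of_length_le_one {α : Type*} {l : List α} (hl : l.length ≤ 1)
    {a b : α} (ha : a ∈ l) (hb : b ∈ l) : a = b := by
  match l, hl with
  | [], _ => cases ha
  | [x], _ =>
    simp only [List.mem_singleton] at ha hb
    subst ha; subst hb; rfl

private lemma mem_assignedTo {M : Finset (R × H)} {r : R} {h : H} :
    r ∈ assignedTo M h ↔ (r, h) ∈ M := by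
  unfold assignedTo
  simp only [Finset.mem_image, Finset.mem_filter, Prod.exists]
  constructor
  · rintro ⟨a, b, ⟨hm, rfl⟩, rfl⟩; exact hm
  · intro hm; exact ⟨r, h, ⟨hm, rfl⟩, rfl⟩

private lemma mem_assignedIn {M : Finset (R × H)} {r : R} {E : Finset H} :
    r ∈ assignedIn M E ↔ ∃ h, (r, h) ∈ M ∧ h ∈ E := by
  unfold assignedIn
  simp only [Finset.mem_image, Finset.mem_filter, Prod.exists]
  constructor
  · rintro ⟨a, b, ⟨hm, hb⟩, rfl⟩; exact ⟨b, hm, hb⟩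
  · rintro ⟨b, hm, hb⟩; exact ⟨r, b, ⟨hm, hb⟩, rfl⟩

private lemma assignedTo_mono {M M' : Finset (R × H)} (hMM : M ⊆ M') (h : H) :
    assignedTo M h ⊆ assignedTo M' h := by
  intro x hx
  rw [mem_assignedTo] at hx ⊢
  exact hMM hx

private lemma assignedIn_mono {M M' : Finset (R × H)} (hMM : M ⊆ M') (E : Finset H) :
    assignedIn M E ⊆ assignedIn M' E := by
  intro x hx
  rw [mem_assignedIn] at hx ⊢
  obtain ⟨b, hm, hb⟩ := hx
  exact ⟨b, hMM hm, hb⟩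

private lemma move_mono {M M' : Finset (R × H)} (hMM : M ⊆ M') (r : R) (h : H) :
    move M r h ⊆ move M' r h :=
  Finset.union_subset_union (Finset.filter_subset_filter _ hMM) (Finset.Subset.refl _)

private lemma filter_ne_of_unassigned {M : Finset (R × H)} {r : R}
    (hr : ∀ h, (r, h) ∉ M) : M.filter (fun p => p.1 ≠ r) = M := by
  apply Finset.filter_true_of_mem
  rintro ⟨a, b⟩ hm heq
  exact hr b (heq ▸ hm)

private lemma move_eq_of_unassigned {M : Finset (R × H)} {r : R}
    (hr : ∀ h, (r, h) ∉ M) (h : H) : move M r h = M ∪ {(r, h)} := by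
  unfold move
  rw [filter_ne_of_unassigned hr]

private lemma move_union_eq {M : Finset (R × H)} {r : R}
    (hr : ∀ h, (r, h) ∉ M) (h₀ h : H) : move (M ∪ {(r, h₀)}) r h = M ∪ {(r, h)} := by
  unfold move
  rw [Finset.filter_union, filter_ne_of_unassigned hr, Finset.filter_singleton]
  simp

/-- select the first element of `l` satisfying `p`. -/
private def pick {α : Type*} (p : α → Prop) [DecidablePred p] : List α → Option α
  | [] => none
  | x :: t => if p x then some x else pick p t

private lemma pick_eq_none {α : Type*} {p : α → Prop} [DecidablePred p] :
    ∀ {l : List α}, pick p l = none → ∀ a ∈ l, ¬ p a := by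
  intro l
  induction l with
  | nil => intro _ a ha; cases ha
  | cons x t ih =>
    intro hnone a ha
    unfold pick at hnone
    by_cases hx : p x
    · simp [hx] at hnone
    · rcases List.mem_cons.mp ha with rfl | ha'
      · exact hx
      · exact ih (by simpa [hx] using hnone) a ha'

private lemma pick_sat {α : Type*} {p : α → Prop} [DecidablePred p] :
    ∀ {l : List α} {a : α}, pick p l = some a → a ∈ l ∧ p a := by
  intro l
  induction l with
  | nil => intro a ha; cases ha
  | cons x t ih =>
    intro a hsome
    unfold pick at hsome
    by_cases hx : p x
    · simp [hx] at hsome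
      exact ⟨by simp [hsome], hsome ▸ hx⟩
    · obtain ⟨ha, hpa⟩ := ih (by simpa [hx] using hsome)
      exact ⟨List.mem_cons_of_mem _ ha, hpa⟩

private lemma pick_before {α : Type*} [DecidableEq α] {p : α → Prop} [DecidablePred p] :
    ∀ {l : List α} {a : α}, pick p l = some a →
      ∀ b ∈ l, l.idxOf b < l.idxOf a → ¬ p b := by
  intro l
  induction l with
  | nil => intro a ha; cases ha
  | cons x t ih =>
    intro a hsome b hb hlt
    unfold pick at hsome
    by_cases hx : p x
    · simp [hx] at hsome
      subst hsome
      simp [List.idxOf_cons_self] at hlt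
    · have hsome' : pick p t = some a := by simpa [hx] using hsome
      by_cases hbx : b = x
      · subst hbx; exact hx
      · have hax : a ≠ x := fun hax => hx (hax ▸ (pick_sat hsome').2)
        have hbt : b ∈ t := (List.mem_cons.mp hb).resolve_left hbx
        rw [List.idxOf_cons_ne _ (Ne.symm hbx), List.idxOf_cons_ne _ (Ne.symm hax)] at hlt
        exact ih hsome' b hbt (Nat.lt_of_succ_lt_succ hlt)

/-- `h` is a good hospital for `r` given partial matching `M`. -/
private def Good (I : HRRC R H) (M : Finset (R × H)) (r : R) (h : H) : Prop :=
  (assignedTo M h).card < I.q h ∧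
    ∀ E ∈ I.regions, (assignedIn (M ∪ {(r, h)}) E).card ≤ I.cap E

open Classical in
private noncomputable def stepM (I : HRRC R H) (M : Finset (R × H)) (r : R) :
    Finset (R × H) :=
  (pick (Good I M r) (I.prefR r)).elim M (fun h => M ∪ {(r, h)})

/-- Invariant of the greedy algorithm after processing the residents in `S`. -/
private structure GreedyInv (I : HRRC R H) (S : Finset R) (M : Finset (R × H)) : Prop where
  acc : ∀ p ∈ M, p.2 ∈ I.prefR p.1 ∧ p.1 ∈ I.prefH p.2
  fn : ∀ r h h', (r, h) ∈ M → (r, h') ∈ M → h = h'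
  cap : ∀ h, (assignedTo M h).card ≤ I.q h
  feas : I.FeasibleCaps M
  dom : ∀ p ∈ M, p.1 ∈ S
  rej : ∀ r ∈ S, ∀ h ∈ I.prefR r,
      ((∀ h', (r, h') ∉ M) ∨ ∃ h', (r, h') ∈ M ∧ ListPref (I.prefR r) h h') →
      (I.q h ≤ (assignedTo M h).card ∨
        ∃ E ∈ I.regions, I.cap E < (assignedIn (move M r h) E).card)

private lemma rej_concl_mono {I : HRRC R H} {M M' : Finset (R × H)} (hMM : M ⊆ M')
    {r : R} {h : H}
    (hc : I.q h ≤ (assignedTo M h).card ∨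
      ∃ E ∈ I.regions, I.cap E < (assignedIn (move M r h) E).card) :
    I.q h ≤ (assignedTo M' h).card ∨
      ∃ E ∈ I.regions, I.cap E < (assignedIn (move M' r h) E).card := by
  rcases hc with hc | ⟨E, hE, hc⟩
  · exact Or.inl (hc.trans (Finset.card_le_card (assignedTo_mono hMM h)))
  · exact Or.inr ⟨E, hE, hc.trans_le
      (Finset.card_le_card (assignedIn_mono (move_mono hMM r h) E))⟩

/-- from the failure of `Good I M r h` with `r` unassigned, deduce the rejection record. -/
private lemma notGood_concl {I : HRRC R H} {M : Finset (R × H)} {r : R} {h : H}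
    (hun : ∀ h', (r, h') ∉ M) (hng : ¬ Good I M r h) :
    I.q h ≤ (assignedTo M h).card ∨
      ∃ E ∈ I.regions, I.cap E < (assignedIn (move M r h) E).card := by
  unfold Good at hng
  push_neg at hng
  by_cases hcard : (assignedTo M h).card < I.q h
  · obtain ⟨E, hE, hgt⟩ := hng hcard
    exact Or.inr ⟨E, hE, by rwa [move_eq_of_unassigned hun]⟩
  · exact Or.inl (Nat.le_of_not_lt hcard)

open Classical in
private lemma inv_step (I : HRRC R H) (hwf : I.WellFormed) {S : Finset R}
    {M : Finset (R × H)} {r : R} (hInv : GreedyInv I S M) (hr : r ∉ S) :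
    GreedyInv I (insert r S) (stepM I M r) := by
  have hun : ∀ h', (r, h') ∉ M := fun h' hm => hr (hInv.dom _ hm)
  unfold stepM
  rcases hp : pick (Good I M r) (I.prefR r) with _ | h₀
  · -- no hospital chosen
    simp only [Option.elim]
    refine ⟨hInv.acc, hInv.fn, hInv.cap, hInv.feas,
      fun p hp => Finset.mem_insert_of_mem (hInv.dom p hp), ?_⟩
    intro r' hr' h hh hhyp
    rcases Finset.mem_insert.mp hr' with rfl | hr'S
    · exact notGood_concl hun (pick_eq_none hp h hh)
    · exact hInv.rej r' hr'S h hh hhyp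
  · -- hospital h₀ chosen
    obtain ⟨hh₀, hg₀⟩ := pick_sat hp
    simp only [Option.elim]
    set M' := M ∪ {(r, h₀)} with hM'
    have hsub : M ⊆ M' := Finset.subset_union_left
    have hmemM' : ∀ p : R × H, p ∈ M' ↔ p ∈ M ∨ p = (r, h₀) := by
      intro p; simp [hM', or_comm]
    have hfn' : ∀ a h h', (a, h) ∈ M' → (a, h') ∈ M' → h = h' := by
      intro a h h' h1 h2
      rcases (hmemM' _).mp h1 with h1 | h1 <;> rcases (hmemM' _).mp h2 with h2 | h2
      · exact hInv.fn a h h' h1 h2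
      · exact absurd h1 (by rw [Prod.mk.injEq] at h2; exact h2.1 ▸ hun h)
      · exact absurd h2 (by rw [Prod.mk.injEq] at h1; exact h1.1 ▸ hun h')
      · rw [Prod.mk.injEq] at h1 h2; rw [h1.2, h2.2]
    have hassign' : ∀ h, assignedTo M' h ⊆ insert r (assignedTo M h) := by
      intro h x hx
      rw [mem_assignedTo, hmemM'] at hx
      rcases hx with hx | hx
      · exact Finset.mem_insert_of_mem (mem_assignedTo.mpr hx)
      · rw [Prod.mk.injEq] at hx; exact Finset.mem_insert.mpr (Or.inl hx.1)
    have hassign_ne : ∀ h, h ≠ h₀ → assignedTo M' h = assignedTo M h := by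
      intro h hne
      ext x
      rw [mem_assignedTo, mem_assignedTo, hmemM']
      constructor
      · rintro (hx | hx)
        · exact hx
        · rw [Prod.mk.injEq] at hx; exact absurd hx.2 hne
      · exact Or.inl
    refine ⟨?_, hfn', ?_, hg₀.2, ?_, ?_⟩
    · intro p hpM'
      rcases (hmemM' _).mp hpM' with hpM | rfl
      · exact hInv.acc p hpM
      · exact ⟨hh₀, (hwf.2.2.1 r h₀).mp hh₀⟩
    · intro h
      by_cases hne : h = h₀
      · subst hne
        calc (assignedTo M' h).card ≤ (insert r (assignedTo M h)).card :=
              Finset.card_le_card (hassign' h)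
          _ ≤ (assignedTo M h).card + 1 := Finset.card_insert_le _ _
          _ ≤ I.q h := hg₀.1
      · rw [hassign_ne h hne]; exact hInv.cap h
    · intro p hpM'
      rcases (hmemM' _).mp hpM' with hpM | rfl
      · exact Finset.mem_insert_of_mem (hInv.dom p hpM)
      · exact Finset.mem_insert_self r S
    · intro r' hr' h hh hhyp
      rcases Finset.mem_insert.mp hr' with rfl | hr'S
      · -- r' = r : use pick_before
        rcases hhyp with hnone | ⟨h', hh'M, hlp⟩
        · exact absurd ((hmemM' _).mpr (Or.inr rfl)) (hnone h₀)
        · have hh'₀ : h' = h₀ := hfn' _ h' h₀ hh'M ((hmemM' _).mpr (Or.inr rfl))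
          subst hh'₀
          have hng : ¬ Good I M _ h := pick_before hp h hh hlp.2
          have := notGood_concl hun hng
          rcases this with hc | ⟨E, hE, hc⟩
          · exact Or.inl (hc.trans (Finset.card_le_card (assignedTo_mono hsub h)))
          · refine Or.inr ⟨E, hE, ?_⟩
            rwa [move_eq_of_unassigned hun, ← move_union_eq hun h' h] at hc
      · -- r' old
        have hne : r' ≠ r := fun he => hr (he ▸ hr'S)
        have hhyp' : (∀ h', (r', h') ∉ M) ∨
            ∃ h', (r', h') ∈ M ∧ ListPref (I.prefR r') h h' := by
          rcases hhyp with hnone | ⟨h', hh'M, hlp⟩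
          · exact Or.inl fun h' hm => hnone h' (hsub hm)
          · rcases (hmemM' _).mp hh'M with hm | hm
            · exact Or.inr ⟨h', hm, hlp⟩
            · rw [Prod.mk.injEq] at hm; exact absurd hm.1 hne
        exact rej_concl_mono hsub (hInv.rej r' hr'S h hh hhyp')

private lemma inv_fold (I : HRRC R H) (hwf : I.WellFormed) :
    ∀ (L : List R) (S : Finset R) (M : Finset (R × H)), GreedyInv I S M → L.Nodup →
      (∀ x ∈ L, x ∉ S) → GreedyInv I (S ∪ L.toFinset) (L.foldl (stepM I) M) := by
  intro L
  induction L with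
  | nil => intro S M hInv _ _; simpa using hInv
  | cons r t ih =>
    intro S M hInv hnd hdisj
    have h1 : GreedyInv I (insert r S) (stepM I M r) :=
      inv_step I hwf hInv (hdisj r List.mem_cons_self)
    have h2 := ih (insert r S) (stepM I M r) h1 (List.nodup_cons.mp hnd).2
      (fun x hx => by
        intro hmem
        rcases Finset.mem_insert.mp hmem with rfl | hxS
        · exact (List.nodup_cons.mp hnd).1 hx
        · exact hdisj x (List.mem_cons_of_mem _ hx) hxS)
    simpa [List.foldl_cons, List.toFinset_cons, Finset.union_insert,
      Finset.insert_union] using h2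


end Aux

/-- Every HRRC instance in which each hospital's preference list has length at most 1
admits a strongly stable matching. -/
theorem every_short_hospital_list_HRRC_has_strongly_stable_matching
    {R H : Type*} [DecidableEq R] [DecidableEq H] [Fintype R] [Fintype H]
    (I : HRRC R H) (hwf : I.WellFormed)
    (hβ : ∀ h, (I.prefH h).length ≤ 1) :
    ∃ M : Finset (R × H), I.IsStronglyStable M := by
  classical
  set L : List R := (Finset.univ : Finset R).toList with hL
  set M : Finset (R × H) := L.foldl (stepM I) ∅ with hM
  have hInv0 : GreedyInv I ∅ (∅ : Finset (R × H)) := by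
    refine ⟨?_, ?_, ?_, ?_, ?_, ?_⟩
    · intro p hp; cases hp
    · intro r h h' h1; cases h1
    · intro h; simp [HRRC.assignedTo]
    · intro E _; simp [HRRC.assignedIn]
    · intro p hp; cases hp
    · intro r hr; cases hr
  have hInv : GreedyInv I ((∅ : Finset R) ∪ L.toFinset) M :=
    inv_fold I hwf L ∅ ∅ hInv0 (Finset.nodup_toList _) (by intro x _ hx; cases hx)
  have hLT : ((∅ : Finset R) ∪ L.toFinset) = (Finset.univ : Finset R) := by
    simp [hL]
  rw [hLT] at hInv
  refine ⟨M, ⟨hInv.acc, hInv.fn, hInv.cap⟩, hInv.feas, ?_⟩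
  rintro r h ⟨⟨hnm, ⟨haccR, haccH⟩, hthird, hfourth⟩, hstrong⟩
  -- the "preferred resident" disjunct is impossible since |prefH h| ≤ 1
  have hnopref : ¬ ∃ r' ∈ HRRC.assignedTo M h, ListPref (I.prefH h) r r' := by
    rintro ⟨r', hr'mem, hlp⟩
    have hr'M : (r', h) ∈ M := mem_assignedTo.mp hr'mem
    have hr'acc : r' ∈ I.prefH h := (hInv.acc _ hr'M).2
    have : r = r' := eq_of_length_le_one (hβ h) haccH hr'acc
    subst this
    exact lt_irrefl _ hlp.2
  have hcard : (HRRC.assignedTo M h).card < I.q h := hfourth.resolve_right hnopref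
  have hfeas : I.FeasibleCaps (HRRC.move M r h) := hstrong.resolve_right hnopref
  rcases hInv.rej r (Finset.mem_univ r) h haccR hthird with hc | ⟨E, hE, hc⟩
  · exact absurd hcard (Nat.not_lt.mpr hc)
  · exact absurd (hfeas E hE) (Nat.not_le.mpr hc)
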